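/- Let $\mu$ be a finite Borel measure on a cube $F \subset \mathbb{R}^n$ and let $b \in L^2(\mu)$ be supported on $F$ with $\int_F b\,d\mu = \mu(F)$ and $\int_F |b|^2\,d\mu \le A\,\mu(F)$ for some constant $A \ge 1$. If $\{Q_i\}_i$ is a countable disjoint collection of subsets of $F$ such that $|\frac{1}{\mu(Q_i)}\int_{Q_i} b\,d\mu| < 1/2$ for every $i$ (with $\mu(Q_i) > 0$), then $\mu(\bigcup_i Q_i) \le (1 - \frac{1}{4A})\mu(F)$. -/

import Mathlib

open MeasureTheory

/-- Accretivity/stopping-time estimate: if `b` is supported on `F`, has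
mean `μ F` over `F` and `L²` norm squared at most `A·μ F`, and `{Q i}` is a disjoint
collection of subsets of `F` of positive measure on which the average of `b` is small,
then the `Q i` capture at most `(1 - 1/(4A))` of the mass of `F`. -/
theorem stmt0 {X : Type*} [MeasurableSpace X] (μ : Measure X) [IsFiniteMeasure μ]
    (F : Set X) (hF : MeasurableSet F) (b : X → ℝ) (A : ℝ) (hA : 1 ≤ A)
    (hbmem : MemLp b 2 μ)
    (hbsupp : ∀ x ∉ F, b x = 0)
    (hbmean : ∫ x in F, b x ∂μ = (μ F).toReal)
    (hbL2 : ∫ x in F, (b x) ^ 2 ∂μ ≤ A * (μ F).toReal)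
    (Q : ℕ → Set X) (hQm : ∀ i, MeasurableSet (Q i))
    (hQF : ∀ i, Q i ⊆ F)
    (hdisj : Pairwise (Function.onFun Disjoint Q))
    (hpos : ∀ i, 0 < μ (Q i))
    (hsmall : ∀ i, |(∫ x in Q i, b x ∂μ) / (μ (Q i)).toReal| < 1 / 2) :
    (μ (⋃ i, Q i)).toReal ≤ (1 - 1 / (4 * A)) * (μ F).toReal := by
  set U := ⋃ i, Q i with hUdef
  have hUm : MeasurableSet U := MeasurableSet.iUnion hQm
  have hUF : U ⊆ F := Set.iUnion_subset hQF
  have hbint : Integrable b μ := hbmem.integrable one_le_two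
  have hb2int : Integrable (fun x => b x ^ 2) μ := hbmem.integrable_sq
  set m := (μ F).toReal with hmdef
  set u := (μ U).toReal with hudef
  set g := (μ (F \ U)).toReal with hgdef
  have hm0 : 0 < m := ENNReal.toReal_pos
    (((hpos 0).trans_le (measure_mono (hQF 0))).ne') (measure_ne_top μ F)
  have hu_le : u ≤ m :=
    ENNReal.toReal_mono (measure_ne_top μ F) (measure_mono hUF)
  have hg0 : 0 ≤ g := ENNReal.toReal_nonneg
  have hgu : g = m - u := by
    rw [hgdef, measure_diff hUF hUm.nullMeasurableSet (measure_ne_top μ U),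
      ENNReal.toReal_sub_of_le (measure_mono hUF) (measure_ne_top μ F)]
  -- the measures of the `Q i` sum up to `u`
  have hUmeas : μ U = ∑' i, μ (Q i) := measure_iUnion hdisj hQm
  have hUsum : u = ∑' i, (μ (Q i)).toReal := by
    rw [hudef, hUmeas, ENNReal.tsum_toReal_eq (fun i => measure_ne_top μ _)]
  have hsummable : Summable (fun i => (μ (Q i)).toReal) :=
    ENNReal.summable_toReal (by rw [← hUmeas]; exact measure_ne_top μ _)
  -- the integral over each `Q i` is at most half of its measure
  have habs : ∀ i, |∫ x in Q i, b x ∂μ| ≤ 1 / 2 * (μ (Q i)).toReal := by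
    intro i
    have ht : 0 < (μ (Q i)).toReal :=
      ENNReal.toReal_pos (hpos i).ne' (measure_ne_top μ _)
    have h := hsmall i
    rw [abs_div, abs_of_pos ht, div_lt_iff₀ ht] at h
    linarith
  have hIsummable : Summable (fun i => ∫ x in Q i, b x ∂μ) := by
    refine Summable.of_abs ?_
    exact Summable.of_nonneg_of_le (fun i => abs_nonneg _) habs (hsummable.mul_left _)
  -- the integral over `U` is at most `u/2`
  have hIU : ∫ x in U, b x ∂μ ≤ 1 / 2 * u := by
    rw [hUdef, integral_iUnion hQm hdisj hbint.integrableOn]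
    calc ∑' i, ∫ x in Q i, b x ∂μ
        ≤ ∑' i, 1 / 2 * (μ (Q i)).toReal :=
          Summable.tsum_le_tsum (fun i => (le_abs_self _).trans (habs i)) hIsummable
            (hsummable.mul_left _)
      _ = 1 / 2 * u := by rw [hUsum, tsum_mul_left]
  -- the integral over `F \ U` is at least `m - u/2`
  have hsplit : ∫ x in F \ U, b x ∂μ = m - ∫ x in U, b x ∂μ := by
    rw [integral_diff hUm hbint.integrableOn hUF, hbmean]
  have hlow : m - 1 / 2 * u ≤ ∫ x in F \ U, b x ∂μ := by
    rw [hsplit]; linarith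
  -- Cauchy-Schwarz on `F \ U`
  set S := ∫ x in F \ U, (b x) ^ 2 ∂μ with hSdef
  have hS0 : 0 ≤ S := integral_nonneg fun x => sq_nonneg _
  have hSA : S ≤ A * m := by
    refine le_trans ?_ hbL2
    exact setIntegral_mono_set hb2int.integrableOn
      (Filter.Eventually.of_forall fun x => sq_nonneg _)
      (Set.diff_subset.eventuallyLE)
  have hconj : Real.HolderConjugate 2 2 := Real.HolderConjugate.two_two
  have hCS : ∫ x in F \ U, b x ∂μ ≤ S ^ ((1:ℝ)/2) * g ^ ((1:ℝ)/2) := by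
    have h1 : ∫ x in F \ U, b x ∂μ ≤ ∫ x in F \ U, ‖b x‖ * ‖(1:ℝ)‖ ∂μ := by
      simp only [norm_one, mul_one]
      exact integral_mono hbint.integrableOn hbint.norm.integrableOn
        (fun x => le_abs_self _)
    refine h1.trans ?_
    have hb2 : MemLp b (ENNReal.ofReal 2) (μ.restrict (F \ U)) := by
      rw [show ENNReal.ofReal 2 = 2 by norm_num]; exact hbmem.restrict _
    have h2 := integral_mul_norm_le_Lp_mul_Lq (μ := μ.restrict (F \ U)) hconj
      hb2 (memLp_const (1:ℝ))
    have e1 : ∀ x : X, ‖b x‖ ^ (2:ℝ) = (b x) ^ 2 := fun x => by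
      rw [show (2:ℝ) = ((2:ℕ):ℝ) by norm_num, Real.rpow_natCast, Real.norm_eq_abs,
        sq_abs]
    have e2 : (∫ x in F \ U, ‖(1:ℝ)‖ ^ (2:ℝ) ∂μ) = g := by
      simp [hgdef, Measure.real]
    simp only [e1] at h2
    rw [e2] at h2
    exact h2
  -- combine
  have hhalf : m / 2 ≤ S ^ ((1:ℝ)/2) * g ^ ((1:ℝ)/2) := by
    refine le_trans ?_ (hlow.trans hCS)
    linarith
  have hsq : (m / 2) ^ 2 ≤ S * g := by
    have h := pow_le_pow_left₀ (by positivity) hhalf 2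
    calc (m / 2) ^ 2 ≤ (S ^ ((1:ℝ)/2) * g ^ ((1:ℝ)/2)) ^ 2 := h
      _ = S * g := by
        rw [mul_pow, ← Real.rpow_natCast (S ^ ((1:ℝ)/2)) 2,
          ← Real.rpow_natCast (g ^ ((1:ℝ)/2)) 2, ← Real.rpow_mul hS0,
          ← Real.rpow_mul hg0]
        norm_num
  have hAm : 0 < A := lt_of_lt_of_le one_pos hA
  have hAg : m ≤ 4 * A * g := by
    nlinarith [mul_le_mul_of_nonneg_right hSA hg0, sq_nonneg m]
  have hfinal : m / (4 * A) ≤ g := by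
    rw [div_le_iff₀ (by positivity)]
    nlinarith
  have heq : (1 - 1 / (4 * A)) * m = m - m / (4 * A) := by
    field_simp
  rw [heq]
  linarith [hgu]
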